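/- Suppose b ∈ ℝ is irrational and n ∈ ℕ, n ≥ 1. Then for every integer q ≠ 0, the function H(x,y) = (y·(1-x)^{n+b}/F(x,y))^q, where F is the degree-n invariant polynomial of ẋ = x(1-x), ẏ = y(n+bx-y) with cofactor n-nx-y, is not a rational function of (x,y); in particular no power of H yields a rational first integral from this Darboux construction. -/

import Mathlib

/-- Pochhammer symbol `(c)_n = c(c+1)⋯(c+n-1)`. -/
noncomputable def poch (c : ℝ) (n : ℕ) : ℝ := ∏ i ∈ Finset.range n, (c + i)

/-- The function `F(x,y) = y (n-1)! Σ_{ν=0}^{n-1} (-1)^{n+ν} (n+b-ν+1)_ν x^ν/ν! + (b+1)_n x^n`. -/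
noncomputable def Fval (n : ℕ) (b : ℝ) (x y : ℝ) : ℝ :=
  y * (Nat.factorial (n - 1) : ℝ) *
      ∑ ν ∈ Finset.range n,
        (-1) ^ (n + ν) * poch ((n : ℝ) + b - ν + 1) ν * x ^ ν / (Nat.factorial ν : ℝ)
    + poch (b + 1) n * x ^ n

open Polynomial Filter Real Set Topology

/-- A finite set of reals is eventually avoided along `𝓝[>] 0`. -/
lemma aux_finite_not_mem {s : Set ℝ} (hs : s.Finite) : ∀ᶠ t in 𝓝[>] (0:ℝ), t ∉ s := by
  have h1 : ∀ᶠ t in 𝓝 (0:ℝ), t ∉ s \ {0} := by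
    have ho : IsOpen (s \ {0})ᶜ := (hs.subset Set.diff_subset).isClosed.isOpen_compl
    exact ho.eventually_mem (by simp)
  have h2 : ∀ᶠ t in 𝓝[>] (0:ℝ), t ≠ 0 := by
    filter_upwards [self_mem_nhdsWithin] with t ht using ne_of_gt ht
  filter_upwards [h1.filter_mono nhdsWithin_le_nhds, h2] with t ht1 ht2 hts
  exact ht1 ⟨hts, ht2⟩

/-- Key analytic lemma: if `β` is irrational then `t^β · U(t) = V(t)` cannot hold near `0⁺`
with `U` eventually nonvanishing. -/
lemma aux_key {β : ℝ} (hβ : Irrational β) (U V : Polynomial ℝ)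
    (hU : ∀ᶠ t in 𝓝[>] (0:ℝ), Polynomial.eval t U ≠ 0)
    (hE : ∀ᶠ t in 𝓝[>] (0:ℝ), t ^ β * Polynomial.eval t U = Polynomial.eval t V) : False := by
  have hpos : ∀ᶠ t in 𝓝[>] (0:ℝ), 0 < t := self_mem_nhdsWithin
  have hV : ∀ᶠ t in 𝓝[>] (0:ℝ), Polynomial.eval t V ≠ 0 := by
    filter_upwards [hU, hE, hpos] with t h1 h2 h3
    rw [← h2]
    exact mul_ne_zero (ne_of_gt (Real.rpow_pos_of_pos h3 β)) h1
  obtain ⟨t₀, hu0, hv0⟩ := (hU.and hV).exists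
  have hUne : U ≠ 0 := fun h => hu0 (by simp [h])
  have hVne : V ≠ 0 := fun h => hv0 (by simp [h])
  set j := U.rootMultiplicity 0 with hj
  set k := V.rootMultiplicity 0 with hk
  set U₂ := U /ₘ (X - C 0) ^ j with hU₂
  set V₂ := V /ₘ (X - C 0) ^ k with hV₂
  have hU₂0 : U₂.eval 0 ≠ 0 := Polynomial.eval_divByMonic_pow_rootMultiplicity_ne_zero 0 hUne
  have hV₂0 : V₂.eval 0 ≠ 0 := Polynomial.eval_divByMonic_pow_rootMultiplicity_ne_zero 0 hVne
  have hUeq : ∀ t : ℝ, U.eval t = t ^ j * U₂.eval t := by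
    intro t
    conv_lhs => rw [← Polynomial.pow_mul_divByMonic_rootMultiplicity_eq U 0]
    rw [Polynomial.eval_mul, Polynomial.eval_pow, Polynomial.eval_sub, Polynomial.eval_X,
      Polynomial.eval_C, sub_zero, ← hj, ← hU₂]
  have hVeq : ∀ t : ℝ, V.eval t = t ^ k * V₂.eval t := by
    intro t
    conv_lhs => rw [← Polynomial.pow_mul_divByMonic_rootMultiplicity_eq V 0]
    rw [Polynomial.eval_mul, Polynomial.eval_pow, Polynomial.eval_sub, Polynomial.eval_X,
      Polynomial.eval_C, sub_zero, ← hk, ← hV₂]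
  have hU₂ne : ∀ᶠ t in 𝓝[>] (0:ℝ), U₂.eval t ≠ 0 :=
    ((U₂.continuous.continuousAt.eventually_ne hU₂0).filter_mono nhdsWithin_le_nhds)
  set γ := β + (j:ℝ) - (k:ℝ) with hγdef
  have hγ : Irrational γ := by
    have : Irrational (β + ((j:ℤ) - (k:ℤ) : ℤ)) := hβ.add_intCast _
    convert this using 1
    push_cast
    ring
  have hγ0 : γ ≠ 0 := hγ.ne_zero
  have hEq2 : ∀ᶠ t in 𝓝[>] (0:ℝ), t ^ γ = V₂.eval t / U₂.eval t := by
    filter_upwards [hE, hpos, hU₂ne] with t h1 ht h2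
    rw [hUeq t, hVeq t] at h1
    have hkne : (t:ℝ) ^ k ≠ 0 := pow_ne_zero _ (ne_of_gt ht)
    have hg : t ^ γ = t ^ β * t ^ (j:ℕ) / t ^ (k:ℕ) := by
      rw [hγdef, Real.rpow_sub ht, Real.rpow_add ht, Real.rpow_natCast, Real.rpow_natCast]
    rw [hg, div_eq_div_iff hkne h2]
    linear_combination h1
  have hc : V₂.eval 0 / U₂.eval 0 ≠ 0 := div_ne_zero hV₂0 hU₂0
  have hT1 : Tendsto (fun t : ℝ => V₂.eval t / U₂.eval t) (𝓝[>] (0:ℝ))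
      (𝓝 (V₂.eval 0 / U₂.eval 0)) := by
    have := (V₂.continuous.tendsto 0).div (U₂.continuous.tendsto 0) hU₂0
    exact this.mono_left nhdsWithin_le_nhds
  have hT : Tendsto (fun t : ℝ => t ^ γ) (𝓝[>] (0:ℝ)) (𝓝 (V₂.eval 0 / U₂.eval 0)) :=
    hT1.congr' (hEq2.mono fun t h => h.symm)
  have hexp : ∀ᶠ t in 𝓝[>] (0:ℝ), Real.exp (Real.log t * γ) = t ^ γ := by
    filter_upwards [hpos] with t ht
    rw [Real.rpow_def_of_pos ht]
  rcases lt_or_gt_of_ne hγ0 with hneg | hposγ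
  · have h2 : Tendsto (fun t : ℝ => Real.exp (Real.log t * γ)) (𝓝[>] (0:ℝ)) atTop :=
      Real.tendsto_exp_atTop.comp
        (Real.tendsto_log_nhdsGT_zero.atBot_mul_const_of_neg hneg)
    have h3 : Tendsto (fun t : ℝ => t ^ γ) (𝓝[>] (0:ℝ)) atTop := h2.congr' hexp
    exact not_tendsto_atTop_of_tendsto_nhds hT h3
  · have h2 : Tendsto (fun t : ℝ => Real.exp (Real.log t * γ)) (𝓝[>] (0:ℝ)) (𝓝 0) :=
      Real.tendsto_exp_atBot.comp
        (Real.tendsto_log_nhdsGT_zero.atBot_mul_const hposγ)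
    have h3 : Tendsto (fun t : ℝ => t ^ γ) (𝓝[>] (0:ℝ)) (𝓝 0) := h2.congr' hexp
    exact hc (tendsto_nhds_unique hT h3)

/-- The polynomial in `x` obtained from `Fval n b x 1`. -/
noncomputable def FP (n : ℕ) (b : ℝ) : Polynomial ℝ :=
  Polynomial.C ((Nat.factorial (n - 1) : ℝ)) *
      ∑ ν ∈ Finset.range n,
        Polynomial.C ((-1:ℝ) ^ (n + ν) * poch ((n : ℝ) + b - ν + 1) ν / (Nat.factorial ν : ℝ)) *
          Polynomial.X ^ ν
    + Polynomial.C (poch (b + 1) n) * Polynomial.X ^ n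

lemma FP_eval (n : ℕ) (b : ℝ) (x : ℝ) : (FP n b).eval x = Fval n b x 1 := by
  simp only [FP, Fval, Polynomial.eval_add, Polynomial.eval_mul, Polynomial.eval_C,
    Polynomial.eval_pow, Polynomial.eval_X, Polynomial.eval_finset_sum, one_mul]
  congr 1
  rw [Finset.mul_sum, Finset.mul_sum]
  refine Finset.sum_congr rfl fun ν _ => ?_
  ring

lemma FP_eval_zero (n : ℕ) (hn : 1 ≤ n) (b : ℝ) :
    (FP n b).eval 0 = (Nat.factorial (n - 1) : ℝ) * (-1) ^ n := by
  simp only [FP, Polynomial.eval_add, Polynomial.eval_mul, Polynomial.eval_C,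
    Polynomial.eval_pow, Polynomial.eval_X, Polynomial.eval_finset_sum]
  rw [Finset.sum_eq_single_of_mem 0 (Finset.mem_range.mpr hn)]
  · rw [zero_pow (by omega : n ≠ 0)]
    simp [poch]
  · intro ν _ hν
    rw [zero_pow hν]
    ring

lemma FP_eval_zero_ne (n : ℕ) (hn : 1 ≤ n) (b : ℝ) : (FP n b).eval 0 ≠ 0 := by
  rw [FP_eval_zero n hn b]
  exact mul_ne_zero (Nat.cast_ne_zero.mpr (Nat.factorial_ne_zero _))
    (pow_ne_zero _ (by norm_num))

/-- Restriction of a two-variable polynomial to the line `y = 1`. -/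
noncomputable def toUni (P : MvPolynomial (Fin 2) ℝ) : Polynomial ℝ :=
  MvPolynomial.aeval ![Polynomial.X, 1] P

lemma toUni_eval (P : MvPolynomial (Fin 2) ℝ) (x : ℝ) :
    (toUni P).eval x = MvPolynomial.eval ![x, 1] P := by
  have h := MvPolynomial.comp_aeval_apply (f := ![Polynomial.X, (1 : Polynomial ℝ)])
    (Polynomial.aeval x : Polynomial ℝ →ₐ[ℝ] ℝ) P
  have h2 : (fun i => (Polynomial.aeval x) (![Polynomial.X, (1 : Polynomial ℝ)] i))
      = ![x, (1:ℝ)] := by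
    funext i
    fin_cases i <;> simp
  rw [h2] at h
  have h3 : (Polynomial.aeval x) (toUni P) = (toUni P).eval x := by
    rw [Polynomial.coe_aeval_eq_eval]
  rw [← h3, toUni, h]
  rw [MvPolynomial.aeval_def]
  rfl

/-- If `b` is irrational, then for every nonzero integer `q` the function
`H(x,y) = (y (1-x)^{n+b} / F(x,y))^q` does not agree, on the region where
`1 - x > 0` and `F ≠ 0`, with any quotient of polynomials: no power of the
Darboux first integral yields a rational first integral. -/
theorem not_rational (n : ℕ) (hn : 1 ≤ n) (b : ℝ) (hb : Irrational b) (q : ℤ) (hq : q ≠ 0) :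
    ¬ ∃ P Q : MvPolynomial (Fin 2) ℝ, Q ≠ 0 ∧
      ∀ x y : ℝ, 1 - x > 0 → Fval n b x y ≠ 0 →
        (y * (1 - x) ^ ((n : ℝ) + b) / Fval n b x y) ^ q =
          MvPolynomial.eval ![x, y] P / MvPolynomial.eval ![x, y] Q := by
  rintro ⟨P, Q, -, h⟩
  have hα : Irrational ((n:ℝ) + b) := hb.natCast_add n
  set m := q.natAbs with hmdef
  have hm0 : m ≠ 0 := Int.natAbs_ne_zero.mpr hq
  have hβ : Irrational ((m:ℝ) * ((n:ℝ) + b)) := hα.natCast_mul hm0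
  set Pc := (toUni P).comp (1 - Polynomial.X) with hPcdef
  set Qc := (toUni Q).comp (1 - Polynomial.X) with hQcdef
  set Fc := (FP n b).comp (1 - Polynomial.X) with hFcdef
  have hFceval : ∀ t : ℝ, Fc.eval t = Fval n b (1 - t) 1 := by
    intro t
    rw [hFcdef, Polynomial.eval_comp]
    simp [FP_eval]
  have hPceval : ∀ t : ℝ, Pc.eval t = MvPolynomial.eval ![1 - t, (1:ℝ)] P := by
    intro t
    rw [hPcdef, Polynomial.eval_comp]
    simp [toUni_eval]
  have hQceval : ∀ t : ℝ, Qc.eval t = MvPolynomial.eval ![1 - t, (1:ℝ)] Q := by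
    intro t
    rw [hQcdef, Polynomial.eval_comp]
    simp [toUni_eval]
  have hFc0 : Fc ≠ 0 := by
    intro hz
    have h1 : Fc.eval 1 = 0 := by rw [hz]; simp
    rw [hFcdef, Polynomial.eval_comp] at h1
    simp only [Polynomial.eval_sub, Polynomial.eval_one, Polynomial.eval_X, sub_self] at h1
    exact FP_eval_zero_ne n hn b h1
  have hroots : ∀ᶠ t in 𝓝[>] (0:ℝ), Fc.eval t ≠ 0 := by
    have := aux_finite_not_mem (Polynomial.finite_setOf_isRoot hFc0)
    filter_upwards [this] with t ht
    exact fun h0 => ht h0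
  have hpos : ∀ᶠ t in 𝓝[>] (0:ℝ), 0 < t := self_mem_nhdsWithin
  have hlt1 : ∀ᶠ t in 𝓝[>] (0:ℝ), t < 1 := by
    have : Set.Iio (1:ℝ) ∈ 𝓝 (0:ℝ) := Iio_mem_nhds (by norm_num)
    exact (eventually_mem_set.mpr this).filter_mono nhdsWithin_le_nhds
  have hE0 : ∀ᶠ t in 𝓝[>] (0:ℝ),
      (t ^ ((n:ℝ) + b) / Fc.eval t) ^ q = Pc.eval t / Qc.eval t ∧ Fc.eval t ≠ 0 := by
    filter_upwards [hroots, hlt1, hpos] with t hF h1 h0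
    refine ⟨?_, hF⟩
    have hFv : Fval n b (1 - t) 1 ≠ 0 := by rwa [← hFceval]
    have hx : (1:ℝ) - (1 - t) > 0 := by linarith
    have hmain := h (1 - t) 1 hx hFv
    have e1 : (1:ℝ) - (1 - t) = t := by ring
    rw [e1, one_mul] at hmain
    rw [hFceval, hPceval, hQceval]
    exact hmain
  have hne : ∀ᶠ t in 𝓝[>] (0:ℝ), Pc.eval t ≠ 0 ∧ Qc.eval t ≠ 0 := by
    filter_upwards [hE0, hpos] with t ht h0
    obtain ⟨hEq, hF⟩ := ht
    have hL : (t ^ ((n:ℝ) + b) / Fc.eval t) ^ q ≠ 0 :=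
      zpow_ne_zero q (div_ne_zero (ne_of_gt (Real.rpow_pos_of_pos h0 _)) hF)
    rw [hEq] at hL
    constructor
    · intro hz; rw [hz] at hL; simp at hL
    · intro hz; rw [hz] at hL; simp at hL
  rcases Int.natAbs_eq q with hq' | hq'
  · -- q = m > 0 : t^β * Qc = Fc^m * Pc
    refine aux_key hβ Qc (Fc ^ m * Pc) (hne.mono fun t ht => ht.2) ?_
    filter_upwards [hE0, hne, hpos] with t ht hne' h0
    obtain ⟨hEq, hF⟩ := ht
    rw [← hmdef] at hq'
    rw [hq', zpow_natCast, div_pow] at hEq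
    have h2 : (t ^ ((n:ℝ) + b)) ^ m = t ^ ((m:ℝ) * ((n:ℝ) + b)) := by
      rw [mul_comm, Real.rpow_mul h0.le, Real.rpow_natCast]
    rw [h2] at hEq
    have h3 := (div_eq_div_iff (pow_ne_zero m hF) hne'.2).mp hEq
    rw [Polynomial.eval_mul, Polynomial.eval_pow]
    linear_combination h3
  · -- q = -m : t^β * Pc = Fc^m * Qc
    refine aux_key hβ Pc (Fc ^ m * Qc) (hne.mono fun t ht => ht.1) ?_
    filter_upwards [hE0, hne, hpos] with t ht hne' h0
    obtain ⟨hEq, hF⟩ := ht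
    rw [← hmdef] at hq'
    rw [hq', zpow_neg, zpow_natCast, div_pow, inv_div] at hEq
    have h2 : (t ^ ((n:ℝ) + b)) ^ m = t ^ ((m:ℝ) * ((n:ℝ) + b)) := by
      rw [mul_comm, Real.rpow_mul h0.le, Real.rpow_natCast]
    rw [h2] at hEq
    have htb : t ^ ((m:ℝ) * ((n:ℝ) + b)) ≠ 0 := ne_of_gt (Real.rpow_pos_of_pos h0 _)
    have h3 := (div_eq_div_iff htb hne'.2).mp hEq
    rw [Polynomial.eval_mul, Polynomial.eval_pow]
    linear_combination (-1 : ℝ) * h3
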